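/- Let α, γ > 0, β ∈ ℝ, Q = β/√(αγ) with -1 < Q < 0, and set A(z) = α z₁⁴ + 2β z₁² z₂² + γ z₂⁴. Then for all ξ, η ∈ ℝ²: Re A(ξ+iη) + 8(1-Q)/(1+Q)² · A(η) = (Q+1)[α(ξ₁² - ((3-Q)/(1+Q))η₁²)² + γ(ξ₂² - ((3-Q)/(1+Q))η₂²)²] - Q(√α ξ₁² - √γ ξ₂²)² - 2Q(√α ξ₁η₁ + √γ ξ₂η₂)² - 2Q√(αγ)(ξ₁η₂ + ξ₂η₁)² - Q((3-Q)/(1+Q))²(√α η₁² - √γ η₂²)². -/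

import Mathlib

open Complex

/-- identity (relation1) in the regime `-1 < Q < 0`. -/
theorem stmt3 (α β γ : ℝ) (hα : 0 < α) (hγ : 0 < γ)
    (Q : ℝ) (hQdef : Q = β / Real.sqrt (α * γ)) (hQ1 : -1 < Q) (hQ2 : Q < 0)
    (ξ1 ξ2 η1 η2 : ℝ) :
    ((α : ℂ) * (ξ1 + η1 * I) ^ 4 + 2 * β * (ξ1 + η1 * I) ^ 2 * (ξ2 + η2 * I) ^ 2
        + γ * (ξ2 + η2 * I) ^ 4).re
      + 8 * (1 - Q) / (1 + Q) ^ 2 * (α * η1 ^ 4 + 2 * β * η1 ^ 2 * η2 ^ 2 + γ * η2 ^ 4)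
    = (Q + 1) * (α * (ξ1 ^ 2 - (3 - Q) / (1 + Q) * η1 ^ 2) ^ 2
          + γ * (ξ2 ^ 2 - (3 - Q) / (1 + Q) * η2 ^ 2) ^ 2)
      - Q * (Real.sqrt α * ξ1 ^ 2 - Real.sqrt γ * ξ2 ^ 2) ^ 2
      - 2 * Q * (Real.sqrt α * ξ1 * η1 + Real.sqrt γ * ξ2 * η2) ^ 2
      - 2 * Q * Real.sqrt (α * γ) * (ξ1 * η2 + ξ2 * η1) ^ 2
      - Q * ((3 - Q) / (1 + Q)) ^ 2
          * (Real.sqrt α * η1 ^ 2 - Real.sqrt γ * η2 ^ 2) ^ 2 := by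
  set a := Real.sqrt α with ha
  set b := Real.sqrt γ with hb
  have ha2 : a ^ 2 = α := Real.sq_sqrt hα.le
  have hb2 : b ^ 2 = γ := Real.sq_sqrt hγ.le
  have hab : Real.sqrt (α * γ) = a * b := Real.sqrt_mul hα.le γ
  have hbpos : 0 < a * b := by
    rw [← hab]; positivity
  have hβ : β = Q * (a * b) := by
    rw [hQdef, hab, div_mul_cancel₀ _ hbpos.ne']
  have hQ0 : 1 + Q ≠ 0 := by linarith
  subst hβ
  rw [hab, ← ha2, ← hb2]
  simp only [pow_succ, pow_zero, one_mul, Complex.add_re, Complex.add_im,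
    Complex.mul_re, Complex.mul_im, Complex.I_re, Complex.I_im,
    Complex.ofReal_re, Complex.ofReal_im, Complex.one_re, Complex.one_im,
    Complex.ofReal_mul, Complex.ofReal_pow, Complex.ofReal_ofNat,
    Complex.re_ofNat, Complex.im_ofNat]
  field_simp
  ring
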